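/- arXiv:0905.3197 — 5 statements merged into one kernel-verified Lean document; each statement's English description precedes it below -/
import Mathlib

section
/- Let G and H be finite simple graphs, let x_i ∈ V(G), and let G_i' and the map π from distributions on G_i' × H to distributions on G × H be as defined. If D_0 and D_n are distributions on G_i' × H such that D_n is reachable from D_0 in G_i' × H, then some distribution containing π(D_n) is reachable from π(D_0) in G × H. -/
open scoped BigOperators

/-- A single pebbling move on a simple graph: remove two pebbles from `u`
and add one pebble on an adjacent vertex `v`. -/
def PebMove {V : Type*} [DecidableEq V] (G : SimpleGraph V) (D D' : V → ℕ) : Prop :=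
  ∃ u v, G.Adj u v ∧ 2 ≤ D u ∧
    D' = fun w => if w = u then D u - 2 else if w = v then D v + 1 else D w

/-- `D'` is reachable from `D`: some sequence of pebbling moves starting at `D`
produces a distribution containing `D'`. -/
def Reaches {V : Type*} [DecidableEq V] (G : SimpleGraph V) (D D' : V → ℕ) : Prop :=
  ∃ D'', Relation.ReflTransGen (PebMove G) D D'' ∧ ∀ v, D' v ≤ D'' v

/-- Total number of pebbles of a distribution. -/
def pebTotal {V : Type*} [Fintype V] (D : V → ℕ) : ℕ := ∑ v, D v

/-- The pebbling number of a set `S` of target distributions on `G`: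
the least `N` (possibly `∞`) such that every member of `S` is reachable from
every distribution with at least `N` pebbles in total. -/
noncomputable def pebSet {V : Type*} [Fintype V] [DecidableEq V] (G : SimpleGraph V)
    (S : Set (V → ℕ)) : ℕ∞ :=
  sInf {N : ℕ∞ | ∀ D₀ : V → ℕ, N ≤ (pebTotal D₀ : ℕ∞) → ∀ D ∈ S, Reaches G D₀ D}

/-- The pebbling number of a single target distribution. -/
noncomputable def peb {V : Type*} [Fintype V] [DecidableEq V] (G : SimpleGraph V)
    (D : V → ℕ) : ℕ∞ :=
  pebSet G {D}

/-- The distribution with `t` pebbles on `v` and none elsewhere. -/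
def unitDist {V : Type*} [DecidableEq V] (t : ℕ) (v : V) : V → ℕ :=
  fun w => if w = v then t else 0


/-- The graph `Gᵢ'` obtained from `G` by adding a single new vertex `none`
joined by a single edge to `xᵢ`. -/
def extendGraph {V : Type*} (G : SimpleGraph V) (xi : V) : SimpleGraph (Option V) where
  Adj a b :=
    (∃ u v, a = some u ∧ b = some v ∧ G.Adj u v) ∨
    (a = some xi ∧ b = none) ∨ (a = none ∧ b = some xi)
  symm := by
    constructor
    rintro a b (⟨u, v, rfl, rfl, h⟩ | ⟨rfl, rfl⟩ | ⟨rfl, rfl⟩)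
    · exact Or.inl ⟨v, u, rfl, rfl, h.symm⟩
    · exact Or.inr (Or.inr ⟨rfl, rfl⟩)
    · exact Or.inr (Or.inl ⟨rfl, rfl⟩)
  loopless := by
    constructor
    rintro a (⟨u, v, rfl, h, hadj⟩ | ⟨h1, h2⟩ | ⟨h1, h2⟩) <;> simp_all

/-- The map `π` sending a distribution on `Gᵢ' × H` to a distribution on
`G × H`, replacing each pebble on `(x', y)` by two pebbles on `(xᵢ, y)`. -/
def projDist {V W : Type*} [DecidableEq V] (xi : V) (D : Option V × W → ℕ) :
    V × W → ℕ :=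
  fun p =>
    if p.1 = xi then D (some p.1, p.2) + 2 * D (none, p.2) else D (some p.1, p.2)

section AuxLemmas

lemma liftMove {V : Type*} [DecidableEq V] (G : SimpleGraph V) {D E D' : V → ℕ}
    (hle : ∀ v, D v ≤ E v) (h : PebMove G D D') :
    ∃ E', PebMove G E E' ∧ ∀ v, D' v ≤ E' v := by
  obtain ⟨u, v, hadj, h2, rfl⟩ := h
  refine ⟨fun w => if w = u then E u - 2 else if w = v then E v + 1 else E w,
    ⟨u, v, hadj, le_trans h2 (hle u), rfl⟩, ?_⟩
  intro w
  dsimp only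
  split_ifs with h1 hv
  · have := hle u; omega
  · have := hle v; omega
  · exact hle w

lemma liftChain {V : Type*} [DecidableEq V] (G : SimpleGraph V) {D E D' : V → ℕ}
    (hle : ∀ v, D v ≤ E v) (h : Relation.ReflTransGen (PebMove G) D D') :
    ∃ E', Relation.ReflTransGen (PebMove G) E E' ∧ ∀ v, D' v ≤ E' v := by
  induction h with
  | refl => exact ⟨E, .refl, hle⟩
  | tail _ hstep ih =>
    obtain ⟨E', hE', hle'⟩ := ih
    obtain ⟨E'', hE'', hle''⟩ := liftMove G hle' hstep
    exact ⟨E'', hE'.tail hE'', hle''⟩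

lemma stepLemma {V W : Type*} [DecidableEq V] [DecidableEq W]
    (G : SimpleGraph V) (H : SimpleGraph W) (xi : V)
    {D D' : Option V × W → ℕ}
    (h : PebMove (SimpleGraph.boxProd (extendGraph G xi) H) D D') :
    ∃ D'', Relation.ReflTransGen (PebMove (SimpleGraph.boxProd G H)) (projDist xi D) D'' ∧
      ∀ p, projDist xi D' p ≤ D'' p := by
  obtain ⟨⟨u1, u2⟩, ⟨v1, v2⟩, hadj, h2, rfl⟩ := h
  rw [SimpleGraph.boxProd_adj] at hadj
  rcases hadj with ⟨hG, (heq : u2 = v2)⟩ | ⟨hH, (heq : u1 = v1)⟩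
  · subst heq
    rcases hG with ⟨a, b, (ha : u1 = some a), (hb : v1 = some b), hab⟩ | ⟨(h1 : u1 = some xi), (h2' : v1 = none)⟩ | ⟨(h1 : u1 = none), (h2' : v1 = some xi)⟩
    · -- real move (a,u2) → (b,u2)
      subst ha; subst hb
      refine ⟨fun w => if w = (a, u2) then projDist xi D (a, u2) - 2
        else if w = (b, u2) then projDist xi D (b, u2) + 1 else projDist xi D w,
        Relation.ReflTransGen.single ⟨(a, u2), (b, u2),
          SimpleGraph.boxProd_adj.mpr (Or.inl ⟨hab, rfl⟩), ?_, rfl⟩, ?_⟩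
      · simp only [projDist]; split <;> omega
      · rintro ⟨p1, p2⟩
        simp only [projDist, Prod.mk.injEq, Option.some.injEq]
        have hne : a ≠ b := hab.ne
        by_cases e1 : p1 = a <;> by_cases e2 : p2 = u2 <;> by_cases e3 : p1 = b <;>
          by_cases e4 : p1 = xi <;> subst_vars <;> simp_all <;> omega
    · -- move from (xi, u2) to the new vertex: π unchanged (equal)
      subst h1; subst h2'
      refine ⟨projDist xi D, .refl, ?_⟩
      rintro ⟨p1, p2⟩
      simp only [projDist, Prod.mk.injEq, Option.some.injEq]
      by_cases e1 : p1 = xi <;> by_cases e2 : p2 = u2 <;> subst_vars <;> simp_all <;> omega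
    · -- move from the new vertex to (xi, u2): π decreases
      subst h1; subst h2'
      refine ⟨projDist xi D, .refl, ?_⟩
      rintro ⟨p1, p2⟩
      simp only [projDist, Prod.mk.injEq, Option.some.injEq]
      by_cases e1 : p1 = xi <;> by_cases e2 : p2 = u2 <;> subst_vars <;> simp_all <;> omega
  · subst heq
    match u1 with
    | some a =>
      -- real move (a,u2) → (a,v2)
      refine ⟨fun w => if w = (a, u2) then projDist xi D (a, u2) - 2
        else if w = (a, v2) then projDist xi D (a, v2) + 1 else projDist xi D w,
        Relation.ReflTransGen.single ⟨(a, u2), (a, v2),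
          SimpleGraph.boxProd_adj.mpr (Or.inr ⟨hH, rfl⟩), ?_, rfl⟩, ?_⟩
      · simp only [projDist]; split <;> omega
      · rintro ⟨p1, p2⟩
        simp only [projDist, Prod.mk.injEq, Option.some.injEq]
        have hne : u2 ≠ v2 := hH.ne
        by_cases e1 : p1 = a <;> by_cases e2 : p2 = u2 <;> by_cases e3 : p2 = v2 <;>
          by_cases e4 : p1 = xi <;> subst_vars <;> simp_all <;> omega
    | none =>
      -- move on the new copy: simulate by two moves (xi,u2) → (xi,v2)
      have hne : u2 ≠ v2 := hH.ne
      have h4 : 4 ≤ projDist xi D (xi, u2) := by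
        simp [projDist]; omega
      set E1 : V × W → ℕ := fun w => if w = (xi, u2) then projDist xi D (xi, u2) - 2
        else if w = (xi, v2) then projDist xi D (xi, v2) + 1 else projDist xi D w with hE1
      set E2 : V × W → ℕ := fun w => if w = (xi, u2) then E1 (xi, u2) - 2
        else if w = (xi, v2) then E1 (xi, v2) + 1 else E1 w with hE2
      have hadj' : (SimpleGraph.boxProd G H).Adj (xi, u2) (xi, v2) :=
        SimpleGraph.boxProd_adj.mpr (Or.inr ⟨hH, rfl⟩)
      have hE1u : E1 (xi, u2) = projDist xi D (xi, u2) - 2 := by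
        rw [hE1]; simp
      refine ⟨E2, Relation.ReflTransGen.head ⟨(xi, u2), (xi, v2), hadj', by omega, hE1⟩
        (Relation.ReflTransGen.single ⟨(xi, u2), (xi, v2), hadj', by omega, hE2⟩), ?_⟩
      rintro ⟨p1, p2⟩
      simp only [projDist, hE2, hE1, Prod.mk.injEq, Option.some.injEq]
      by_cases e1 : p1 = xi <;> by_cases e2 : p2 = u2 <;> by_cases e3 : p2 = v2 <;>
        subst_vars <;> simp_all [projDist] <;> omega

end AuxLemmas

open SimpleGraph in
/-- If `Dₙ` is reachable from `D₀` in `Gᵢ' × H`, then a distribution containing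
`π(Dₙ)` is reachable from `π(D₀)` in `G × H`. -/
theorem pulling_back {V W : Type*} [DecidableEq V] [DecidableEq W]
    (G : SimpleGraph V) (H : SimpleGraph W) (xi : V)
    (D₀ Dₙ : Option V × W → ℕ)
    (h : Reaches (extendGraph G xi □ H) D₀ Dₙ) :
    Reaches (G □ H) (projDist xi D₀) (projDist xi Dₙ) := by
  obtain ⟨Dend, hchain, hle⟩ := h
  have hmono : ∀ p, projDist xi Dₙ p ≤ projDist xi Dend p := by
    rintro ⟨p1, p2⟩
    simp only [projDist]
    have h1 := hle (some p1, p2)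
    have h2 := hle (none, p2)
    split <;> omega
  have key : ∀ {A B : Option V × W → ℕ},
      Relation.ReflTransGen (PebMove (extendGraph G xi □ H)) A B →
      Reaches (G □ H) (projDist xi A) (projDist xi B) := by
    intro A B hAB
    induction hAB with
    | refl => exact ⟨_, .refl, fun _ => le_rfl⟩
    | tail _ hstep ih =>
      obtain ⟨F, hF, hle1⟩ := ih
      obtain ⟨F2, hF2, hle2⟩ := stepLemma G H xi hstep
      obtain ⟨F', hF', hle3⟩ := liftChain (G □ H) hle1 hF2
      exact ⟨F', hF.trans hF', fun p => le_trans (hle2 p) (hle3 p)⟩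
  obtain ⟨F, hF, hFle⟩ := key hchain
  exact ⟨F, hF, fun p => le_trans (hmono p) (hFle p)⟩
end

section
/- For any finite simple graph G, any positive integer s, and any vertex x_i ∈ V(G), one has π_{2s}(G, x_i) = π_s(G_i', x'), where G_i' is obtained from G by adding a new vertex x' joined to x_i by a single edge. -/
open scoped BigOperators

section Aux

variable {V : Type*} [DecidableEq V] {G : SimpleGraph V}

/-- Extra pebbles never hurt: a move sequence from `D` can be mirrored from any `E ≥ D`. -/
lemma rtg_mono {D D' : V → ℕ} (h : Relation.ReflTransGen (PebMove G) D D')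
    {E : V → ℕ} (hle : ∀ v, D v ≤ E v) :
    ∃ E', Relation.ReflTransGen (PebMove G) E E' ∧ ∀ v, D' v ≤ E' v := by
  induction h with
  | refl => exact ⟨E, .refl, hle⟩
  | @tail b c _ hmove ih =>
    obtain ⟨E1, hE1, hle1⟩ := ih
    obtain ⟨u, w, hadj, hu, rfl⟩ := hmove
    have huw : w ≠ u := fun h => G.loopless.irrefl u (h ▸ hadj)
    refine ⟨fun x => if x = u then E1 u - 2 else if x = w then E1 w + 1 else E1 x,
      hE1.tail ⟨u, w, hadj, le_trans hu (hle1 u), rfl⟩, ?_⟩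
    intro v
    have h1 := hle1 u; have h2 := hle1 w; have h3 := hle1 v
    by_cases hvu : v = u <;> by_cases hvw : v = w <;> simp [hvu, hvw, huw] <;> omega

lemma reaches_trans {D D' D'' : V → ℕ} (h1 : Reaches G D D') (h2 : Reaches G D' D'') :
    Reaches G D D'' := by
  obtain ⟨F, hF, hle⟩ := h1
  obtain ⟨F', hF', hle'⟩ := h2
  obtain ⟨F'', hF'', hle''⟩ := rtg_mono hF' hle
  exact ⟨F'', hF.trans hF'', fun v => (hle' v).trans (hle'' v)⟩

lemma reaches_refl (D : V → ℕ) : Reaches G D D := ⟨D, .refl, fun _ => le_rfl⟩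

lemma total_update_update {W : Type*} [Fintype W] [DecidableEq W] (f : W → ℕ) {u w : W}
    (huw : u ≠ w) (a b : ℕ) :
    pebTotal (Function.update (Function.update f u a) w b) + f u + f w
      = pebTotal f + a + b := by
  classical
  unfold pebTotal
  have h1 : ∑ v, Function.update (Function.update f u a) w b v
      = b + ∑ v ∈ Finset.univ.erase w, Function.update f u a v := by
    rw [← Finset.add_sum_erase _ _ (Finset.mem_univ w)]
    congr 1
    · simp
    · exact Finset.sum_congr rfl fun x hx => by
        rw [Function.update_of_ne (Finset.ne_of_mem_erase hx)]
  have h2 : ∑ v ∈ Finset.univ.erase w, Function.update f u a v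
      = a + ∑ v ∈ (Finset.univ.erase w).erase u, f v := by
    rw [← Finset.add_sum_erase _ _ (Finset.mem_erase.2 ⟨huw, Finset.mem_univ u⟩)]
    congr 1
    · simp
    · exact Finset.sum_congr rfl fun x hx => by
        rw [Function.update_of_ne (Finset.ne_of_mem_erase hx)]
  have h3 : ∑ v, f v = f w + ∑ v ∈ Finset.univ.erase w, f v :=
    (Finset.add_sum_erase _ _ (Finset.mem_univ w)).symm
  have h4 : ∑ v ∈ Finset.univ.erase w, f v
      = f u + ∑ v ∈ (Finset.univ.erase w).erase u, f v :=
    (Finset.add_sum_erase _ _ (Finset.mem_erase.2 ⟨huw, Finset.mem_univ u⟩)).symm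
  omega

/-- Deficiency lemma: if `E ≤ D + f` pointwise and `E` can perform a move sequence
reaching `E'`, then `D` can reach some `D'` with `E' ≤ D' + f'` where the total
deficiency `f'` does not exceed that of `f`. -/
lemma deficiency [Fintype V] {E E' : V → ℕ}
    (h : Relation.ReflTransGen (PebMove G) E E') :
    ∀ D f : V → ℕ, (∀ v, E v ≤ D v + f v) →
      ∃ D' f', Relation.ReflTransGen (PebMove G) D D' ∧ (∀ v, E' v ≤ D' v + f' v) ∧
        pebTotal f' ≤ pebTotal f := by
  induction h using Relation.ReflTransGen.head_induction_on with
  | refl => exact fun D f hDf => ⟨D, f, .refl, hDf, le_rfl⟩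
  | @head B C hmove _ ih =>
    intro D f hDf
    obtain ⟨u, w, hadj, hu, rfl⟩ := hmove
    have huw : u ≠ w := fun h => G.loopless.irrefl u (h ▸ hadj)
    by_cases hDu : 2 ≤ D u
    · obtain ⟨D', f', hsteps, h1, h2⟩ := ih
        (fun x => if x = u then D u - 2 else if x = w then D w + 1 else D x) f (by
          intro v
          have h1 := hDf u; have h2 := hDf w; have h3 := hDf v
          by_cases hvu : v = u <;> by_cases hvw : v = w <;>
            simp [hvu, hvw, huw.symm] <;> omega)
      exact ⟨D', f', .head ⟨u, w, hadj, hDu, rfl⟩ hsteps, h1, h2⟩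
    · set f1 := Function.update (Function.update f u ((B u - D u) - 2)) w (f w + 1) with hf1
      obtain ⟨D', f', hsteps, h1, h2⟩ := ih D f1 (by
        intro v
        have h1 := hDf u; have h2 := hDf w; have h3 := hDf v
        by_cases hvu : v = u <;> by_cases hvw : v = w <;>
          simp [hvu, hvw, hf1, Function.update_of_ne, huw, huw.symm] <;> omega)
      refine ⟨D', f', hsteps, h1, h2.trans ?_⟩
      rw [hf1]
      have htot := total_update_update f huw ((B u - D u) - 2) (f w + 1)
      have hfu := hDf u
      omega

end Aux

section Sim

variable {V : Type*} [Fintype V] [DecidableEq V] {G : SimpleGraph V} {xi : V}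

/-- Lift a distribution on `V` to one on `Option V` with `c` pebbles on `none`. -/
def liftD (c : ℕ) (D : V → ℕ) : Option V → ℕ := fun o => o.elim c D

lemma lift_move {c : ℕ} {D D' : V → ℕ} (h : PebMove G D D') :
    PebMove (extendGraph G xi) (liftD c D) (liftD c D') := by
  obtain ⟨u, w, hadj, hu, rfl⟩ := h
  refine ⟨some u, some w, Or.inl ⟨u, w, rfl, rfl, hadj⟩, hu, ?_⟩
  funext o
  cases o with
  | none => simp [liftD]
  | some v =>
    by_cases hvu : v = u <;> by_cases hvw : v = w <;> simp [liftD, hvu, hvw]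

lemma lift_rtg {c : ℕ} {D D' : V → ℕ} (h : Relation.ReflTransGen (PebMove G) D D') :
    Relation.ReflTransGen (PebMove (extendGraph G xi)) (liftD c D) (liftD c D') := by
  induction h with
  | refl => exact .refl
  | tail _ hmove ih => exact ih.tail (lift_move hmove)

/-- Flatten a distribution on `Option V` to one on `V`, valuing each pebble on
`none` as two pebbles on `xi`. -/
def flatD (xi : V) (E : Option V → ℕ) : V → ℕ :=
  fun v => E (some v) + (if v = xi then 2 * E none else 0)

lemma flat_step {E E' : Option V → ℕ} (h : PebMove (extendGraph G xi) E E') :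
    Reaches G (flatD xi E) (flatD xi E') := by
  obtain ⟨u, w, hadj, hu, rfl⟩ := h
  rcases hadj with ⟨a, b, rfl, rfl, hab⟩ | ⟨rfl, rfl⟩ | ⟨rfl, rfl⟩
  · -- ordinary move inside `G`
    have hab' : a ≠ b := fun h => G.loopless.irrefl a (h ▸ hab)
    refine ⟨_, Relation.ReflTransGen.single
      ⟨a, b, hab, by simpa [flatD] using Nat.le_add_right_of_le hu, rfl⟩, ?_⟩
    intro v
    have h2 : (2:ℕ) ≤ E (some a) := hu
    by_cases hva : v = a <;> by_cases hvb : v = b <;>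
      by_cases hvx : v = xi <;>
      simp [flatD, hva, hvb, hvx, hab'] <;>
      first
        | omega
        | (subst_vars; simp_all [flatD, hab'.symm] <;> omega)
  · -- move from `xi` to `none`: the flattening is unchanged
    refine ⟨flatD xi E, .refl, ?_⟩
    intro v
    have h2 : (2:ℕ) ≤ E (some xi) := hu
    by_cases hvx : v = xi <;> simp [flatD, hvx] <;> omega
  · -- move from `none` to `xi`: the flattening decreases
    refine ⟨flatD xi E, .refl, ?_⟩
    intro v
    have h2 : (2:ℕ) ≤ E none := hu
    by_cases hvx : v = xi <;> simp [flatD, hvx] <;> omega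

lemma flat_rtg {E E' : Option V → ℕ}
    (h : Relation.ReflTransGen (PebMove (extendGraph G xi)) E E') :
    Reaches G (flatD xi E) (flatD xi E') := by
  induction h with
  | refl => exact reaches_refl _
  | tail _ hmove ih => exact reaches_trans ih (flat_step hmove)

/-- From `2*m` pebbles on `xi` in the extended graph, put `m` more pebbles on `none`. -/
lemma pump (m : ℕ) : ∀ E : Option V → ℕ, 2 * m ≤ E (some xi) →
    ∃ E', Relation.ReflTransGen (PebMove (extendGraph G xi)) E E' ∧
      E none + m ≤ E' none := by
  induction m with
  | zero => exact fun E _ => ⟨E, .refl, by omega⟩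
  | succ m ih =>
    intro E hE
    set E1 : Option V → ℕ := fun o =>
      if o = some xi then E (some xi) - 2 else if o = (none : Option V) then E none + 1 else E o
      with hE1
    have hmove : PebMove (extendGraph G xi) E E1 :=
      ⟨some xi, none, Or.inr (Or.inl ⟨rfl, rfl⟩), by omega, by rw [hE1]⟩
    obtain ⟨E', hsteps, hle⟩ := ih E1 (by simp [hE1]; omega)
    refine ⟨E', .head hmove hsteps, ?_⟩
    have : E1 none = E none + 1 := by simp [hE1]
    omega

lemma total_option (E : Option V → ℕ) :
    pebTotal E = E none + ∑ v, E (some v) := by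
  simp [pebTotal, Fintype.sum_option]

lemma total_unitDist (t : ℕ) (x : V) : pebTotal (unitDist t x) = t := by
  simp [pebTotal, unitDist, Finset.sum_ite_eq']

end Sim

/-- `π_{2s}(G, xᵢ) = π_s(Gᵢ', x')`. -/
theorem two_s_pebbling_eq_extended {V : Type*} [Fintype V] [DecidableEq V]
    (G : SimpleGraph V) (s : ℕ) (hs : 0 < s) (xi : V) :
    peb G (unitDist (2 * s) xi)
      = peb (extendGraph G xi) (unitDist s (none : Option V)) := by
  unfold peb pebSet
  congr 1
  ext N
  simp only [Set.mem_setOf_eq, Set.mem_singleton_iff, forall_eq]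
  constructor
  · -- `N` good for `G` implies `N` good for `Gᵢ'`
    intro hN E₀ htot
    by_cases hk : s ≤ E₀ none
    · exact ⟨E₀, .refl, fun v => by
        cases v <;> simp [unitDist] <;> omega⟩
    · set k := E₀ none with hkdef
      set D : V → ℕ := fun v => E₀ (some v) with hD
      set Dplus : V → ℕ := fun v => D v + unitDist (2 * k) xi v with hDplus
      have htotE : pebTotal E₀ = k + pebTotal D := by
        rw [total_option]; rfl
      have htotP : pebTotal Dplus = pebTotal D + 2 * k := by
        have : pebTotal Dplus = pebTotal D + pebTotal (unitDist (2 * k) xi) := by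
          simp [hDplus, pebTotal, Finset.sum_add_distrib]
        rw [this, total_unitDist]
      have hNle : N ≤ (pebTotal Dplus : ℕ∞) := le_trans htot (by exact_mod_cast by omega)
      obtain ⟨F, hF, hFle⟩ := hN Dplus hNle
      have hFxi : 2 * s ≤ F xi := by simpa [unitDist] using hFle xi
      obtain ⟨D', f', hsteps, h1, h2⟩ := deficiency hF D (unitDist (2 * k) xi)
        (fun v => le_of_eq rfl)
      have hf'xi : f' xi ≤ 2 * k := by
        have hs1 : f' xi ≤ pebTotal f' :=
          Finset.single_le_sum (fun _ _ => Nat.zero_le _) (Finset.mem_univ xi)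
        rw [total_unitDist] at h2; omega
      have hD'xi : 2 * (s - k) ≤ D' xi := by have := h1 xi; omega
      have hlift : E₀ = liftD k D := by funext o; cases o <;> rfl
      have hlrtg :
          Relation.ReflTransGen (PebMove (extendGraph G xi)) (liftD k D) (liftD k D') :=
        lift_rtg hsteps
      obtain ⟨E'', hE'', hle''⟩ := pump (G := G) (s - k) (liftD k D')
        (by simpa [liftD] using hD'xi)
      refine ⟨E'', (hlift ▸ hlrtg).trans hE'', fun v => ?_⟩
      have hn : liftD k D' none = k := rfl
      cases v <;> simp [unitDist] <;> omega
  · -- `N` good for `Gᵢ'` implies `N` good for `G`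
    intro hN D₀ htot
    have htotE : pebTotal (liftD 0 D₀ : Option V → ℕ) = pebTotal D₀ := by
      rw [total_option]; simp [liftD]; rfl
    obtain ⟨F, hF, hFle⟩ := hN (liftD 0 D₀) (by rw [htotE]; exact htot)
    have hFn : s ≤ F none := by simpa [unitDist] using hFle none
    have hflat : flatD xi (liftD 0 D₀) = D₀ := by funext v; simp [flatD, liftD]
    obtain ⟨F'', hF'', hle''⟩ := flat_rtg (G := G) hF
    rw [hflat] at hF''
    refine ⟨F'', hF'', fun v => ?_⟩
    have hx := hle'' xi
    simp [flatD] at hx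
    by_cases hv : v = xi <;> simp [unitDist, hv] <;> omega
end

section
/- Let G be the weighted complete graph on four vertices {x_1, x_2, x_3, x_4} in which the edges (x_1,x_2) and (x_3,x_4) have weight 2 and every other edge has weight 5, and let Γ be the distribution with one pebble on each vertex. Then: (i) for every vertex v of G, Γ is reachable from the distribution of 13 pebbles on v; and (ii) Γ is not reachable from the distribution with 9 pebbles on x_1 and 4 pebbles on x_2 (and none elsewhere). In particular, the weighted analog of Sjöstrand's cover pebbling theorem fails: π(G, Γ) is strictly larger than the least n such that Γ is reachable from n pebbles placed on any single vertex. -/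
open scoped BigOperators

/-- A weighted graph: a finite simple graph together with a symmetric weight
function assigning a positive integer to each edge. -/
structure WeightedGraph (V : Type*) where
  toSimpleGraph : SimpleGraph V
  w : V → V → ℕ
  w_symm : ∀ u v, w u v = w v u
  w_pos : ∀ u v, toSimpleGraph.Adj u v → 0 < w u v

/-- A weighted pebbling move along the edge `(u, v)`: remove `w u v` pebbles
from `u` and add one pebble on the adjacent vertex `v`. -/
def WPebMove {V : Type*} [DecidableEq V] (G : WeightedGraph V) (D D' : V → ℕ) : Prop :=
  ∃ u v, G.toSimpleGraph.Adj u v ∧ G.w u v ≤ D u ∧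
    D' = fun z => if z = u then D u - G.w u v else if z = v then D v + 1 else D z

/-- `D'` is reachable from `D` in the weighted graph `G`: some sequence of
weighted pebbling moves starting at `D` produces a distribution containing `D'`. -/
def WReaches {V : Type*} [DecidableEq V] (G : WeightedGraph V) (D D' : V → ℕ) : Prop :=
  ∃ D'', Relation.ReflTransGen (WPebMove G) D D'' ∧ ∀ v, D' v ≤ D'' v

/-- The weighted pebbling number of a set `S` of target distributions. -/
noncomputable def wpebSet {V : Type*} [Fintype V] [DecidableEq V] (G : WeightedGraph V)
    (S : Set (V → ℕ)) : ℕ∞ :=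
  sInf {N : ℕ∞ | ∀ D₀ : V → ℕ, N ≤ (pebTotal D₀ : ℕ∞) → ∀ D ∈ S, WReaches G D₀ D}

/-- The weighted pebbling number of a single target distribution. -/
noncomputable def wpeb {V : Type*} [Fintype V] [DecidableEq V] (G : WeightedGraph V)
    (D : V → ℕ) : ℕ∞ :=
  wpebSet G {D}

/-- The weighted complete graph on four vertices in which the edges
`(x₁,x₂)` and `(x₃,x₄)` have weight 2 and every other edge has weight 5. -/
def K4w : WeightedGraph (Fin 4) where
  toSimpleGraph := ⊤
  w := fun u v =>
    if (u = 0 ∧ v = 1) ∨ (u = 1 ∧ v = 0) ∨ (u = 2 ∧ v = 3) ∨ (u = 3 ∧ v = 2)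
    then 2 else 5
  w_symm := by decide
  w_pos := by decide


/-- The set of distributions (as 4-tuples) reachable from `(9,4,0,0)`. -/
def Rset : List (ℕ × ℕ × ℕ × ℕ) := [(0, 0, 0, 1), (0, 0, 1, 0), (0, 1, 0, 0), (0, 1, 0, 1), (0, 1, 0, 2), (0, 1, 1, 0), (0, 1, 1, 1), (0, 1, 2, 0), (0, 2, 0, 1), (0, 2, 0, 2), (0, 2, 1, 0), (0, 2, 1, 1), (0, 2, 2, 0), (0, 3, 0, 1), (0, 3, 1, 0), (0, 4, 0, 0), (0, 6, 0, 1), (0, 6, 1, 0), (0, 7, 0, 0), (1, 0, 0, 1), (1, 0, 0, 2), (1, 0, 1, 0), (1, 0, 1, 1), (1, 0, 2, 0), (1, 1, 0, 1), (1, 1, 1, 0), (1, 2, 0, 0), (1, 3, 0, 1), (1, 3, 1, 0), (1, 4, 0, 1), (1, 4, 1, 0), (1, 5, 0, 0), (1, 8, 0, 0), (2, 0, 0, 0), (2, 0, 0, 1), (2, 0, 0, 2), (2, 0, 1, 0), (2, 0, 1, 1), (2, 0, 2, 0), (2, 1, 0, 1), (2, 1, 1, 0), (2, 2, 0, 1),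 (2, 2, 1, 0), (2, 3, 0, 0), (2, 5, 0, 1), (2, 5, 1, 0), (2, 6, 0, 0), (3, 0, 0, 1), (3, 0, 1, 0), (3, 1, 0, 0), (3, 2, 0, 1), (3, 2, 1, 0), (3, 3, 0, 1), (3, 3, 1, 0), (3, 4, 0, 0), (3, 7, 0, 0), (4, 0, 0, 1), (4, 0, 1, 0), (4, 1, 0, 1), (4, 1, 1, 0), (4, 2, 0, 0), (4, 4, 0, 1), (4, 4, 1, 0), (4, 5, 0, 0), (5, 0, 0, 0), (5, 1, 0, 1), (5, 1, 1, 0), (5, 2, 0, 1), (5, 2, 1, 0), (5, 3, 0, 0), (5, 6, 0, 0), (6, 0, 0, 1), (6, 0, 1, 0), (6, 1, 0, 0), (6, 4, 0, 0), (7, 0, 0, 1), (7, 0, 1, 0), (7, 2, 0, 0), (7, 5, 0, 0), (8, 0, 0, 0), (8, 3, 0, 0), (9, 1, 0, 0), (9, 4, 0, 0), (10, 2, 0, 0), (11, 0, 0, 0)]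

def tup (D : Fin 4 → ℕ) : ℕ × ℕ × ℕ × ℕ := (D 0, D 1, D 2, D 3)

def RInv (D : Fin 4 → ℕ) : Prop := tup D ∈ Rset

lemma rset_closed1 : ∀ p ∈ Rset, 2 ≤ p.1 → (p.1 - 2, p.2.1 + 1, p.2.2.1, p.2.2.2) ∈ Rset := by decide

lemma rset_closed2 : ∀ p ∈ Rset, 5 ≤ p.1 → (p.1 - 5, p.2.1, p.2.2.1 + 1, p.2.2.2) ∈ Rset := by decide

lemma rset_closed3 : ∀ p ∈ Rset, 5 ≤ p.1 → (p.1 - 5, p.2.1, p.2.2.1, p.2.2.2 + 1) ∈ Rset := by decide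

lemma rset_closed4 : ∀ p ∈ Rset, 2 ≤ p.2.1 → (p.1 + 1, p.2.1 - 2, p.2.2.1, p.2.2.2) ∈ Rset := by decide

lemma rset_closed5 : ∀ p ∈ Rset, 5 ≤ p.2.1 → (p.1, p.2.1 - 5, p.2.2.1 + 1, p.2.2.2) ∈ Rset := by decide

lemma rset_closed6 : ∀ p ∈ Rset, 5 ≤ p.2.1 → (p.1, p.2.1 - 5, p.2.2.1, p.2.2.2 + 1) ∈ Rset := by decide

lemma rset_closed7 : ∀ p ∈ Rset, 5 ≤ p.2.2.1 → (p.1 + 1, p.2.1, p.2.2.1 - 5, p.2.2.2) ∈ Rset := by decide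

lemma rset_closed8 : ∀ p ∈ Rset, 5 ≤ p.2.2.1 → (p.1, p.2.1 + 1, p.2.2.1 - 5, p.2.2.2) ∈ Rset := by decide

lemma rset_closed9 : ∀ p ∈ Rset, 2 ≤ p.2.2.1 → (p.1, p.2.1, p.2.2.1 - 2, p.2.2.2 + 1) ∈ Rset := by decide

lemma rset_closed10 : ∀ p ∈ Rset, 5 ≤ p.2.2.2 → (p.1 + 1, p.2.1, p.2.2.1, p.2.2.2 - 5) ∈ Rset := by decide

lemma rset_closed11 : ∀ p ∈ Rset, 5 ≤ p.2.2.2 → (p.1, p.2.1 + 1, p.2.2.1, p.2.2.2 - 5) ∈ Rset := by decide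

lemma rset_closed12 : ∀ p ∈ Rset, 2 ≤ p.2.2.2 → (p.1, p.2.1, p.2.2.1 + 1, p.2.2.2 - 2) ∈ Rset := by decide

lemma rset_nogood : ∀ p ∈ Rset,
    ¬(1 ≤ p.1 ∧ 1 ≤ p.2.1 ∧ 1 ≤ p.2.2.1 ∧ 1 ≤ p.2.2.2) := by decide

lemma inv_step {D D' : Fin 4 → ℕ} (h : RInv D) (m : WPebMove K4w D D') : RInv D' := by
  obtain ⟨u, v, hadj, hle, rfl⟩ := m
  have h1 := rset_closed1 (D 0, D 1, D 2, D 3) h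
  have h2 := rset_closed2 (D 0, D 1, D 2, D 3) h
  have h3 := rset_closed3 (D 0, D 1, D 2, D 3) h
  have h4 := rset_closed4 (D 0, D 1, D 2, D 3) h
  have h5 := rset_closed5 (D 0, D 1, D 2, D 3) h
  have h6 := rset_closed6 (D 0, D 1, D 2, D 3) h
  have h7 := rset_closed7 (D 0, D 1, D 2, D 3) h
  have h8 := rset_closed8 (D 0, D 1, D 2, D 3) h
  have h9 := rset_closed9 (D 0, D 1, D 2, D 3) h
  have h10 := rset_closed10 (D 0, D 1, D 2, D 3) h
  have h11 := rset_closed11 (D 0, D 1, D 2, D 3) h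
  have h12 := rset_closed12 (D 0, D 1, D 2, D 3) h
  have hne : u ≠ v := hadj.ne
  fin_cases u <;> fin_cases v <;>
    first
    | exact (hne rfl).elim
    | exact h1 hle | exact h2 hle | exact h3 hle | exact h4 hle
    | exact h5 hle | exact h6 hle | exact h7 hle | exact h8 hle
    | exact h9 hle | exact h10 hle | exact h11 hle | exact h12 hle

lemma reach_mono {V : Type*} [DecidableEq V] (G : WeightedGraph V) {A B : V → ℕ}
    (h : Relation.ReflTransGen (WPebMove G) A B) :
    ∀ A', (∀ v, A v ≤ A' v) →
      ∃ B', Relation.ReflTransGen (WPebMove G) A' B' ∧ ∀ v, B v ≤ B' v := by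
  induction h using Relation.ReflTransGen.head_induction_on with
  | refl => exact fun A' hA => ⟨A', .refl, hA⟩
  | head hstep _ ih =>
    intro A' hA
    obtain ⟨u, v, hadj, hle, rfl⟩ := hstep
    obtain ⟨B', hB', hBB⟩ := ih
      (fun z => if z = u then A' u - G.w u v else if z = v then A' v + 1 else A' z)
      (by
        intro z
        beta_reduce
        rcases eq_or_ne z u with rfl | hzu
        · rw [if_pos rfl, if_pos rfl]
          exact Nat.sub_le_sub_right (hA z) _
        · rcases eq_or_ne z v with rfl | hzv
          · rw [if_neg hzu, if_pos rfl, if_neg hzu, if_pos rfl]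
            exact Nat.add_le_add_right (hA z) 1
          · rw [if_neg hzu, if_neg hzv, if_neg hzu, if_neg hzv]
            exact hA z)
    exact ⟨B', .head ⟨u, v, hadj, le_trans hle (hA u), rfl⟩ hB', hBB⟩

lemma wreaches_mono {V : Type*} [DecidableEq V] (G : WeightedGraph V) {A A' D : V → ℕ}
    (hA : ∀ v, A v ≤ A' v) (h : WReaches G A D) : WReaches G A' D := by
  obtain ⟨B, hB, hD⟩ := h
  obtain ⟨B', hB', hBB⟩ := reach_mono G hB A' hA
  exact ⟨B', hB', fun v => le_trans (hD v) (hBB v)⟩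

/-- The weighted analog of Sjöstrand's cover pebbling theorem fails: on `K4w`,
13 pebbles on any single vertex cover the graph, but 9 pebbles on `x₁` together
with 4 pebbles on `x₂` do not; hence `π(G, Γ)` exceeds the least `n` such that
`Γ` is reachable from `n` pebbles on any single vertex. -/
theorem weighted_cover_pebbling_counterexample :
    (∀ v : Fin 4, WReaches K4w (unitDist 13 v) (fun _ => 1)) ∧
    ¬ WReaches K4w (fun i => if i = 0 then 9 else if i = 1 then 4 else 0)
        (fun _ => 1) ∧
    sInf {N : ℕ∞ | ∀ (u : Fin 4) (n : ℕ), N ≤ (n : ℕ∞) →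
        WReaches K4w (unitDist n u) (fun _ => 1)}
      < wpeb K4w (fun _ => 1) := by
  have adj : ∀ u v : Fin 4, u ≠ v → K4w.toSimpleGraph.Adj u v := fun u v h => h
  have part1 : ∀ v : Fin 4, WReaches K4w (unitDist 13 v) (fun _ => 1) := by
    intro v
    fin_cases v
    · exact ⟨_, .head ⟨0, 1, adj _ _ (by decide), by decide, rfl⟩
        (.head ⟨0, 2, adj _ _ (by decide), by decide, rfl⟩
        (.head ⟨0, 3, adj _ _ (by decide), by decide, rfl⟩ .refl)), by decide⟩
    · exact ⟨_, .head ⟨1, 0, adj _ _ (by decide), by decide, rfl⟩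
        (.head ⟨1, 2, adj _ _ (by decide), by decide, rfl⟩
        (.head ⟨1, 3, adj _ _ (by decide), by decide, rfl⟩ .refl)), by decide⟩
    · exact ⟨_, .head ⟨2, 3, adj _ _ (by decide), by decide, rfl⟩
        (.head ⟨2, 0, adj _ _ (by decide), by decide, rfl⟩
        (.head ⟨2, 1, adj _ _ (by decide), by decide, rfl⟩ .refl)), by decide⟩
    · exact ⟨_, .head ⟨3, 2, adj _ _ (by decide), by decide, rfl⟩
        (.head ⟨3, 0, adj _ _ (by decide), by decide, rfl⟩
        (.head ⟨3, 1, adj _ _ (by decide), by decide, rfl⟩ .refl)), by decide⟩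
  have part2 : ¬ WReaches K4w (fun i => if i = 0 then 9 else if i = 1 then 4 else 0)
      (fun _ => 1) := by
    rintro ⟨B, hB, hD⟩
    have hInv : RInv B := by
      clear hD
      induction hB with
      | refl => exact (by decide : (9,4,0,0) ∈ Rset)
      | tail _ hstep ih => exact inv_step ih hstep
    exact rset_nogood (tup B) hInv ⟨hD 0, hD 1, hD 2, hD 3⟩
  refine ⟨part1, part2, ?_⟩
  have hle13 : sInf {N : ℕ∞ | ∀ (u : Fin 4) (n : ℕ), N ≤ (n : ℕ∞) →
      WReaches K4w (unitDist n u) (fun _ => 1)} ≤ 13 := by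
    apply sInf_le
    intro u n hn
    have hn' : (13 : ℕ) ≤ n := by exact_mod_cast hn
    refine wreaches_mono K4w (A := unitDist 13 u) ?_ (part1 u)
    intro z
    unfold unitDist
    by_cases hz : z = u <;> simp [hz, hn']
  have hge14 : (14 : ℕ∞) ≤ wpeb K4w (fun _ => 1) := by
    apply le_sInf
    intro N hN
    rw [show (14 : ℕ∞) = 13 + 1 from rfl, ENat.add_one_le_iff (by norm_num)]
    by_contra hcon
    have hN13 : N ≤ 13 := not_lt.mp hcon
    have htot : pebTotal (fun i : Fin 4 => if i = 0 then 9 else if i = 1 then 4 else 0)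
        = 13 := by decide
    have := hN (fun i : Fin 4 => if i = 0 then 9 else if i = 1 then 4 else 0)
      (by rw [htot]; exact_mod_cast hN13) (fun _ => 1) rfl
    exact part2 this
  calc sInf _ ≤ (13 : ℕ∞) := hle13
    _ < 14 := by norm_num
    _ ≤ wpeb K4w (fun _ => 1) := hge14
end

section
/- Let G and H be weighted graphs, let x_i ∈ V(G), let s be a positive integer, and let G_{i,s}' and the map π from distributions on G_{i,s}' × H to distributions on G × H be as defined. If D_0 and D_n are distributions on G_{i,s}' × H such that D_n is reachable from D_0 in G_{i,s}' × H, then some distribution containing π(D_n) is reachable from π(D_0) in G × H. -/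
open scoped BigOperators

open SimpleGraph in
/-- The Cartesian product of two weighted graphs. -/
def WeightedGraph.boxProd {V W : Type*} [DecidableEq V]
    (G : WeightedGraph V) (H : WeightedGraph W) : WeightedGraph (V × W) where
  toSimpleGraph := G.toSimpleGraph □ H.toSimpleGraph
  w := fun p q => if p.1 = q.1 then H.w p.2 q.2 else G.w p.1 q.1
  w_symm := by
    intro p q
    show (if p.1 = q.1 then H.w p.2 q.2 else G.w p.1 q.1)
        = (if q.1 = p.1 then H.w q.2 p.2 else G.w q.1 p.1)
    by_cases h : p.1 = q.1
    · rw [if_pos h, if_pos h.symm, H.w_symm]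
    · rw [if_neg h, if_neg (fun hh => h hh.symm), G.w_symm]
  w_pos := by
    intro p q hpq
    rcases (SimpleGraph.boxProd_adj).mp hpq with ⟨hadj, _⟩ | ⟨hadj, heq⟩
    · have hne : p.1 ≠ q.1 := hadj.ne
      simpa [hne] using G.w_pos _ _ hadj
    · simpa [heq] using H.w_pos _ _ hadj

/-- The weighted graph `G_{i,s}'` obtained from `G` by adding a single new
vertex `none` joined to `xᵢ` by a single edge of weight `s`. -/
def WeightedGraph.extend {V : Type*} (G : WeightedGraph V) (xi : V)
    (s : ℕ) (hs : 0 < s) : WeightedGraph (Option V) where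
  toSimpleGraph :=
    { Adj := fun a b =>
        (∃ u v, a = some u ∧ b = some v ∧ G.toSimpleGraph.Adj u v) ∨
        (a = some xi ∧ b = none) ∨ (a = none ∧ b = some xi)
      symm := by
        constructor
        rintro a b (⟨u, v, rfl, rfl, h⟩ | ⟨rfl, rfl⟩ | ⟨rfl, rfl⟩)
        · exact Or.inl ⟨v, u, rfl, rfl, h.symm⟩
        · exact Or.inr (Or.inr ⟨rfl, rfl⟩)
        · exact Or.inr (Or.inl ⟨rfl, rfl⟩)
      loopless := by
        constructor
        rintro a (⟨u, v, rfl, h1, hadj⟩ | ⟨h1, h2⟩ | ⟨h1, h2⟩) <;> simp_all }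
  w := fun a b => match a, b with
    | some u, some v => G.w u v
    | _, _ => s
  w_symm := by
    rintro (_ | u) (_ | v) <;> simp [G.w_symm]
  w_pos := by
    rintro a b (⟨u, v, rfl, rfl, hadj⟩ | ⟨rfl, rfl⟩ | ⟨rfl, rfl⟩)
    · exact G.w_pos u v hadj
    · exact hs
    · exact hs

/-- The map `π` sending a distribution on `G_{i,s}' × H` to a distribution on
`G × H`, replacing each pebble on `(x', y)` by `s` pebbles on `(xᵢ, y)`. -/
def wprojDist {V W : Type*} [DecidableEq V] (xi : V) (s : ℕ)
    (D : Option V × W → ℕ) : V × W → ℕ :=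
  fun p =>
    if p.1 = xi then D (some p.1, p.2) + s * D (none, p.2) else D (some p.1, p.2)

/-- Pebbling moves are monotone in the starting distribution. -/
lemma wpebMove_mono {V : Type*} [DecidableEq V] (G : WeightedGraph V)
    {D D' E : V → ℕ} (hDE : ∀ v, D v ≤ E v) (h : WPebMove G D D') :
    ∃ E', WPebMove G E E' ∧ ∀ v, D' v ≤ E' v := by
  obtain ⟨u, v, hadj, hle, rfl⟩ := h
  refine ⟨fun z => if z = u then E u - G.w u v else if z = v then E v + 1 else E z,
    ⟨u, v, hadj, le_trans hle (hDE u), rfl⟩, ?_⟩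
  intro z
  by_cases hzu : z = u
  · simp only [hzu, if_pos rfl]
    exact Nat.sub_le_sub_right (hDE u) _
  · have huv : u ≠ v := hadj.ne
    by_cases hzv : z = v
    · simp only [if_neg hzu, hzv, if_neg (Ne.symm huv), if_pos rfl]
      exact Nat.succ_le_succ (hDE v)
    · simp only [if_neg hzu, if_neg hzv]
      exact hDE z

lemma wpebRTG_mono {V : Type*} [DecidableEq V] (G : WeightedGraph V)
    {D D' E : V → ℕ} (hDE : ∀ v, D v ≤ E v)
    (h : Relation.ReflTransGen (WPebMove G) D D') :
    ∃ E', Relation.ReflTransGen (WPebMove G) E E' ∧ ∀ v, D' v ≤ E' v := by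
  induction h with
  | refl => exact ⟨E, Relation.ReflTransGen.refl, hDE⟩
  | tail _ hstep ih =>
    obtain ⟨E', hE', hle'⟩ := ih
    obtain ⟨E'', hE'', hle''⟩ := wpebMove_mono G hle' hstep
    exact ⟨E'', hE'.tail hE'', hle''⟩

lemma wReaches_trans {V : Type*} [DecidableEq V] (G : WeightedGraph V)
    {D₁ D₂ D₃ : V → ℕ} (h12 : WReaches G D₁ D₂) (h23 : WReaches G D₂ D₃) :
    WReaches G D₁ D₃ := by
  obtain ⟨A, hA, h2A⟩ := h12
  obtain ⟨B, hB, h3B⟩ := h23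
  obtain ⟨B', hB', hBB'⟩ := wpebRTG_mono G h2A hB
  exact ⟨B', hA.trans hB', fun v => le_trans (h3B v) (hBB' v)⟩

lemma wReaches_of_le {V : Type*} [DecidableEq V] (G : WeightedGraph V)
    {D D' : V → ℕ} (h : ∀ v, D' v ≤ D v) : WReaches G D D' :=
  ⟨D, Relation.ReflTransGen.refl, h⟩

lemma wReaches_of_move {V : Type*} [DecidableEq V] (G : WeightedGraph V)
    {D D' : V → ℕ} (h : WPebMove G D D') : WReaches G D D' :=
  ⟨D', Relation.ReflTransGen.single h, fun _ => le_refl _⟩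

/-- Repeating a single pebbling move `k` times. -/
lemma wpebMove_iterate {V : Type*} [DecidableEq V] (G : WeightedGraph V)
    {u v : V} (hadj : G.toSimpleGraph.Adj u v) :
    ∀ (k : ℕ) (D : V → ℕ), k * G.w u v ≤ D u →
      Relation.ReflTransGen (WPebMove G)
        D (fun z => if z = u then D u - k * G.w u v else if z = v then D v + k else D z) := by
  have huv : u ≠ v := hadj.ne
  intro k
  induction k with
  | zero =>
    intro D _
    have : (fun z => if z = u then D u - 0 * G.w u v else if z = v then D v + 0 else D z) = D := by
      funext z
      by_cases hzu : z = u
      · simp [hzu]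
      · by_cases hzv : z = v <;> simp [hzu, hzv, Ne.symm huv]
    rw [this]
  | succ k ih =>
    intro D hk
    have hw : G.w u v ≤ D u :=
      le_trans (Nat.le_mul_of_pos_left _ (Nat.succ_pos k)) hk
    set D₁ : V → ℕ := fun z => if z = u then D u - G.w u v else if z = v then D v + 1 else D z
      with hD₁
    have hstep : WPebMove G D D₁ := ⟨u, v, hadj, hw, rfl⟩
    have hD₁u : D₁ u = D u - G.w u v := by simp [hD₁]
    have hD₁v : D₁ v = D v + 1 := by simp [hD₁, Ne.symm huv]
    have hD₁z : ∀ z, z ≠ u → z ≠ v → D₁ z = D z := by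
      intro z h1 h2; simp [hD₁, h1, h2]
    have hring : (k + 1) * G.w u v = G.w u v + k * G.w u v := by ring
    have hk' : k * G.w u v ≤ D₁ u := by rw [hD₁u]; omega
    have := ih D₁ hk'
    have heq : (fun z => if z = u then D₁ u - k * G.w u v else if z = v then D₁ v + k else D₁ z)
        = (fun z => if z = u then D u - (k + 1) * G.w u v else if z = v then D v + (k + 1)
            else D z) := by
      funext z
      by_cases hzu : z = u
      · rw [if_pos hzu, if_pos hzu, hD₁u]
        omega
      · by_cases hzv : z = v
        · rw [if_neg hzu, if_neg hzu, if_pos hzv, if_pos hzv, hD₁v]; omega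
        · rw [if_neg hzu, if_neg hzu, if_neg hzv, if_neg hzv, hD₁z z hzu hzv]
    rw [heq] at this
    exact Relation.ReflTransGen.head hstep this

/-- The key step lemma: a single weighted pebbling move in `G' × H` projects to
a reachability statement in `G × H`. -/
lemma wproj_step {V W : Type*} [DecidableEq V] [DecidableEq W]
    (G : WeightedGraph V) (H : WeightedGraph W) (xi : V) (s : ℕ) (hs : 0 < s)
    {D D' : Option V × W → ℕ}
    (h : WPebMove ((G.extend xi s hs).boxProd H) D D') :
    WReaches (G.boxProd H) (wprojDist xi s D) (wprojDist xi s D') := by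
  obtain ⟨u, v, hadj, hle, rfl⟩ := h
  obtain ⟨a, y⟩ := u
  obtain ⟨b, y'⟩ := v
  rcases (SimpleGraph.boxProd_adj).mp hadj with ⟨hGadj, (hyy : y = y')⟩ | ⟨hHadj, (hab : a = b)⟩
  · subst hyy
    rcases hGadj with ⟨u1, v1, ha, hb, hG⟩ | ⟨ha, hb⟩ | ⟨ha, hb⟩
    · -- ordinary G-edge between `some u1` and `some v1`
      subst ha; subst hb
      have hne : u1 ≠ v1 := hG.ne
      have hw1 : ((G.extend xi s hs).boxProd H).w (some u1, y) (some v1, y) = G.w u1 v1 := by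
        simp [WeightedGraph.boxProd, WeightedGraph.extend, hne]
      have hw2 : (G.boxProd H).w (u1, y) (v1, y) = G.w u1 v1 := by
        simp [WeightedGraph.boxProd, hne]
      rw [hw1] at hle
      apply wReaches_of_move
      refine ⟨(u1, y), (v1, y), SimpleGraph.boxProd_adj.mpr (Or.inl ⟨hG, rfl⟩), ?_, ?_⟩
      · rw [hw2]
        refine le_trans hle ?_
        by_cases h1 : u1 = xi <;> simp [wprojDist, h1]
      · funext p
        obtain ⟨p1, p2⟩ := p
        simp only [wprojDist, hw1, hw2, Prod.mk.injEq, Option.some.injEq]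
        by_cases h1 : p1 = xi <;> by_cases h2 : p1 = u1 <;> by_cases h3 : p1 = v1 <;>
          by_cases h4 : p2 = y <;> (try simp_all) <;> omega
    · -- move from `(some xi, y)` to `(none, y)` : π is unchanged
      subst ha; subst hb
      have hw1 : ((G.extend xi s hs).boxProd H).w (some xi, y) (none, y) = s := by
        simp [WeightedGraph.boxProd, WeightedGraph.extend]
      rw [hw1] at hle
      apply wReaches_of_le
      intro p
      obtain ⟨p1, p2⟩ := p
      simp only [wprojDist, hw1, Prod.mk.injEq, Option.some.injEq]
      by_cases h1 : p1 = xi <;> by_cases h4 : p2 = y <;>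
        (try simp_all [mul_add, mul_one]) <;> omega
    · -- move from `(none, y)` to `(some xi, y)` : π decreases
      subst ha; subst hb
      have hw1 : ((G.extend xi s hs).boxProd H).w (none, y) (some xi, y) = s := by
        simp [WeightedGraph.boxProd, WeightedGraph.extend]
      rw [hw1] at hle
      apply wReaches_of_le
      intro p
      obtain ⟨p1, p2⟩ := p
      have hss : 1 ≤ s * s := Nat.mul_le_mul hs hs
      have hsD : s * s ≤ s * D (none, y) := Nat.mul_le_mul_left s hle
      simp only [wprojDist, hw1, Prod.mk.injEq, Option.some.injEq]
      by_cases h1 : p1 = xi <;> by_cases h4 : p2 = y <;>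
        (try simp_all [mul_add, mul_one, Nat.mul_sub]) <;>
        (first
          | omega
          | (have h8 := Nat.mul_le_mul_left s hle
             have h9 := Nat.mul_le_mul hs hs
             omega))
  · subst hab
    cases a with
    | none =>
      -- H-edge move at the new vertex: simulate with `s` moves at `xi`
      have hne : y ≠ y' := hHadj.ne
      have hw1 : ((G.extend xi s hs).boxProd H).w (none, y) (none, y') = H.w y y' := by
        simp [WeightedGraph.boxProd]
      have hw2 : (G.boxProd H).w (xi, y) (xi, y') = H.w y y' := by
        simp [WeightedGraph.boxProd]
      rw [hw1] at hle
      have hadj' : (G.boxProd H).toSimpleGraph.Adj (xi, y) (xi, y') :=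
        SimpleGraph.boxProd_adj.mpr (Or.inr ⟨hHadj, rfl⟩)
      have hbound : s * (G.boxProd H).w (xi, y) (xi, y') ≤ wprojDist xi s D (xi, y) := by
        rw [hw2]
        simp only [wprojDist, if_pos rfl]
        exact le_trans (Nat.mul_le_mul_left s hle) (Nat.le_add_left _ _)
      refine ⟨_, wpebMove_iterate (G.boxProd H) hadj' s (wprojDist xi s D) hbound, ?_⟩
      intro p
      obtain ⟨p1, p2⟩ := p
      have hsD : s * H.w y y' ≤ s * D (none, y) := Nat.mul_le_mul_left s hle
      rw [hw2]
      simp only [wprojDist, hw1, Prod.mk.injEq, Option.some.injEq]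
      by_cases h1 : p1 = xi <;> by_cases h4 : p2 = y <;> by_cases h5 : p2 = y' <;>
        (try simp_all [mul_add, mul_one, Nat.mul_sub]) <;>
        (first
          | omega
          | (have h8 := Nat.mul_le_mul_left s hle
             omega))
    | some u1 =>
      -- ordinary H-edge move
      have hne : y ≠ y' := hHadj.ne
      have hw1 : ((G.extend xi s hs).boxProd H).w (some u1, y) (some u1, y') = H.w y y' := by
        simp [WeightedGraph.boxProd]
      have hw2 : (G.boxProd H).w (u1, y) (u1, y') = H.w y y' := by
        simp [WeightedGraph.boxProd]
      rw [hw1] at hle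
      apply wReaches_of_move
      refine ⟨(u1, y), (u1, y'), SimpleGraph.boxProd_adj.mpr (Or.inr ⟨hHadj, rfl⟩), ?_, ?_⟩
      · rw [hw2]
        refine le_trans hle ?_
        by_cases h1 : u1 = xi <;> simp [wprojDist, h1]
      · funext p
        obtain ⟨p1, p2⟩ := p
        simp only [wprojDist, hw1, hw2, Prod.mk.injEq, Option.some.injEq]
        by_cases h1 : p1 = xi <;> by_cases h2 : p1 = u1 <;> by_cases h4 : p2 = y <;>
          by_cases h5 : p2 = y' <;> (try simp_all) <;> omega

/-- If `Dₙ` is reachable from `D₀` in `G_{i,s}' × H`, then a distribution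
containing `π(Dₙ)` is reachable from `π(D₀)` in `G × H`. -/
theorem weighted_pulling_back {V W : Type*} [DecidableEq V] [DecidableEq W]
    (G : WeightedGraph V) (H : WeightedGraph W) (xi : V) (s : ℕ) (hs : 0 < s)
    (D₀ Dₙ : Option V × W → ℕ)
    (h : WReaches ((G.extend xi s hs).boxProd H) D₀ Dₙ) :
    WReaches (G.boxProd H) (wprojDist xi s D₀) (wprojDist xi s Dₙ) := by
  obtain ⟨D'', hrtg, hle⟩ := h
  have hproj : WReaches (G.boxProd H) (wprojDist xi s D₀) (wprojDist xi s D'') := by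
    clear hle
    induction hrtg with
    | refl => exact wReaches_of_le _ (fun _ => le_refl _)
    | tail _ hstep ih => exact wReaches_trans _ ih (wproj_step G H xi s hs hstep)
  refine wReaches_trans _ hproj (wReaches_of_le _ ?_)
  intro p
  unfold wprojDist
  by_cases hp : p.1 = xi <;> simp only [hp, if_true, if_false]
  · exact Nat.add_le_add (hle _) (Nat.mul_le_mul_left _ (hle _))
  · exact hle _
end

section
/- For every n ≥ 4, the target-selectable pebbling number of the two endpoint targets on the path P_n equals the pebbling number of the cycle on n−1 vertices: ρ(P_n, {δ_{x_1}, δ_{x_n}}) = π(C_{n−1}). -/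
open scoped BigOperators
open Finset
set_option linter.unusedSectionVars false

/-- The target-selectable pebbling number of a set `S` of target distributions:
the least `N` (possibly `∞`) such that from every distribution with at least
`N` pebbles in total, at least one member of `S` is reachable. -/
noncomputable def tsPeb {V : Type*} [Fintype V] [DecidableEq V] (G : SimpleGraph V)
    (S : Set (V → ℕ)) : ℕ∞ :=
  sInf {N : ℕ∞ | ∀ D₀ : V → ℕ, N ≤ (pebTotal D₀ : ℕ∞) → ∃ D ∈ S, Reaches G D₀ D}

section push
variable {V : Type*} [Fintype V] [DecidableEq V] {W : Type*} [Fintype W] [DecidableEq W]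

def push (f : V → W) (D : V → ℕ) : W → ℕ :=
  fun w => ∑ v ∈ univ.filter (fun v => f v = w), D v

lemma pebTotal_push (f : V → W) (D : V → ℕ) : pebTotal (push f D) = pebTotal D := by
  unfold pebTotal push
  exact Finset.sum_fiberwise_of_maps_to (fun i _ => Finset.mem_univ _) D

lemma le_push (f : V → W) (D : V → ℕ) (v : V) : D v ≤ push f D (f v) :=
  Finset.single_le_sum (f := D) (fun _ _ => Nat.zero_le _)
    (by simp)

lemma push_move_eq (f : V → W) (D : V → ℕ) (u v : V) (huv : f u ≠ f v) (h2 : 2 ≤ D u) :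
    push f (fun w => if w = u then D u - 2 else if w = v then D v + 1 else D w)
      = fun w => if w = f u then push f D (f u) - 2
          else if w = f v then push f D (f v) + 1 else push f D w := by
  funext w
  have huv' : u ≠ v := fun h => huv (by rw [h])
  by_cases hwu : w = f u
  · subst hwu
    rw [if_pos rfl]
    have hu : u ∈ univ.filter (fun x => f x = f u) := by simp
    rw [push, push, ← Finset.add_sum_erase _ _ hu, ← Finset.add_sum_erase _ _ hu]
    have : ∀ x ∈ (univ.filter (fun x => f x = f u)).erase u,
        (if x = u then D u - 2 else if x = v then D v + 1 else D x) = D x := by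
      intro x hx
      have hx1 : x ≠ u := (Finset.mem_erase.1 hx).1
      have hx2 : f x = f u := (Finset.mem_filter.1 (Finset.mem_erase.1 hx).2).2
      have hx3 : x ≠ v := fun h => huv (by rw [← hx2, h])
      simp [hx1, hx3]
    have hss : ∑ x ∈ (univ.filter (fun x => f x = f u)).erase u,
        (if x = u then D u - 2 else if x = v then D v + 1 else D x)
        = ∑ x ∈ (univ.filter (fun x => f x = f u)).erase u, D x :=
      Finset.sum_congr rfl this
    rw [hss, if_pos rfl]
    omega
  · rw [if_neg hwu]
    by_cases hwv : w = f v
    · subst hwv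
      rw [if_pos rfl]
      have hv : v ∈ univ.filter (fun x => f x = f v) := by simp
      rw [push, push, ← Finset.add_sum_erase _ _ hv, ← Finset.add_sum_erase _ _ hv]
      have : ∀ x ∈ (univ.filter (fun x => f x = f v)).erase v,
          (if x = u then D u - 2 else if x = v then D v + 1 else D x) = D x := by
        intro x hx
        have hx1 : x ≠ v := (Finset.mem_erase.1 hx).1
        have hx2 : f x = f v := (Finset.mem_filter.1 (Finset.mem_erase.1 hx).2).2
        have hx3 : x ≠ u := fun h => huv (by rw [← hx2, h])
        simp [hx1, hx3]
      have hss : ∑ x ∈ (univ.filter (fun x => f x = f v)).erase v,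
          (if x = u then D u - 2 else if x = v then D v + 1 else D x)
          = ∑ x ∈ (univ.filter (fun x => f x = f v)).erase v, D x :=
        Finset.sum_congr rfl this
      rw [hss, if_neg (fun h => huv' h.symm), if_pos rfl]
      omega
    · rw [if_neg hwv, push, push]
      refine Finset.sum_congr rfl fun x hx => ?_
      have hx2 : f x = w := (Finset.mem_filter.1 hx).2
      have hx3 : x ≠ u := fun h => hwu (by rw [← hx2, h])
      have hx4 : x ≠ v := fun h => hwv (by rw [← hx2, h])
      simp [hx3, hx4]

lemma push_pebMove {G : SimpleGraph V} {H : SimpleGraph W} {f : V → W}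
    (hf : ∀ a b, G.Adj a b → H.Adj (f a) (f b)) {D D' : V → ℕ}
    (h : PebMove G D D') : PebMove H (push f D) (push f D') := by
  obtain ⟨u, v, hadj, h2, rfl⟩ := h
  exact ⟨f u, f v, hf _ _ hadj, le_trans h2 (le_push f D u),
    push_move_eq f D u v (hf _ _ hadj).ne h2⟩

lemma push_reaches {G : SimpleGraph V} {H : SimpleGraph W} {f : V → W}
    (hf : ∀ a b, G.Adj a b → H.Adj (f a) (f b)) {D D' : V → ℕ}
    (h : Reaches G D D') : Reaches H (push f D) (push f D') := by
  obtain ⟨D'', hrtg, hle⟩ := h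
  refine ⟨push f D'', Relation.ReflTransGen.lift (push f) (fun a b => push_pebMove hf) _ _ hrtg,
    fun w => Finset.sum_le_sum fun x _ => hle x⟩

lemma push_equiv (σ : V ≃ W) (D : V → ℕ) : push (⇑σ) D = fun w => D (σ.symm w) := by
  funext w
  rw [push]
  have : univ.filter (fun v => σ v = w) = {σ.symm w} := by
    ext x
    simp [Equiv.apply_eq_iff_eq_symm_apply]
  rw [this, Finset.sum_singleton]

lemma reaches_head {G : SimpleGraph V} {D E D' : V → ℕ}
    (h1 : PebMove G D E) (h2 : Reaches G E D') : Reaches G D D' := by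
  obtain ⟨D'', hrtg, hle⟩ := h2
  exact ⟨D'', Relation.ReflTransGen.head h1 hrtg, hle⟩

end push

section Specific
open SimpleGraph

variable {m : ℕ}

lemma sub_val_cases (a b : Fin m) :
    (a - b).val = if b.val ≤ a.val then a.val - b.val else m + a.val - b.val := by
  rw [Fin.sub_def]
  have hb := b.isLt; have ha := a.isLt
  split_ifs with h
  · have e : m - b.val + a.val = m + (a.val - b.val) := by omega
    simp only [e, Nat.add_mod_left]
    exact Nat.mod_eq_of_lt (by omega)
  · have e : m - b.val + a.val = m + a.val - b.val := by omega
    simp only [e]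
    exact Nat.mod_eq_of_lt (by omega)

lemma add_val_cases (a b : Fin m) :
    (a + b).val = if a.val + b.val < m then a.val + b.val else a.val + b.val - m := by
  have hb := b.isLt; have ha := a.isLt
  show (a.val + b.val) % m = _
  split_ifs with h
  · exact Nat.mod_eq_of_lt h
  · rw [Nat.mod_eq_sub_mod (by omega)]
    exact Nat.mod_eq_of_lt (by omega)

lemma cycle_adj_iff (hm : 3 ≤ m) (u v : Fin m) :
    (cycleGraph m).Adj u v ↔
      (u.val + 1 = v.val ∨ v.val + 1 = u.val ∨ (u.val = 0 ∧ v.val = m - 1) ∨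
        (v.val = 0 ∧ u.val = m - 1)) := by
  rw [cycleGraph_adj', sub_val_cases, sub_val_cases]
  have := u.isLt; have := v.isLt
  split_ifs <;> omega

/-- rotation by `-v` -/
def rot (v : Fin m) : Fin m ≃ Fin m where
  toFun x := x - v
  invFun x := x + v
  left_inv x := by
    apply Fin.ext
    rw [add_val_cases, sub_val_cases]
    have := x.isLt; have := v.isLt
    split_ifs <;> omega
  right_inv x := by
    apply Fin.ext
    rw [sub_val_cases, add_val_cases]
    have := x.isLt; have := v.isLt
    split_ifs <;> omega

lemma rot_hom (hm : 3 ≤ m) (v a b : Fin m) (h : (cycleGraph m).Adj a b) :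
    (cycleGraph m).Adj (rot v a) (rot v b) := by
  rw [cycle_adj_iff hm] at h ⊢
  show (a - v).val + 1 = (b - v).val ∨ (b - v).val + 1 = (a - v).val ∨
    ((a - v).val = 0 ∧ (b - v).val = m - 1) ∨ ((b - v).val = 0 ∧ (a - v).val = m - 1)
  rw [sub_val_cases, sub_val_cases]
  have := a.isLt; have := b.isLt; have := v.isLt
  split_ifs <;> omega

lemma rot_symm_hom (hm : 3 ≤ m) (v a b : Fin m) (h : (cycleGraph m).Adj a b) :
    (cycleGraph m).Adj ((rot v).symm a) ((rot v).symm b) := by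
  rw [cycle_adj_iff hm] at h ⊢
  show (a + v).val + 1 = (b + v).val ∨ (b + v).val + 1 = (a + v).val ∨
    ((a + v).val = 0 ∧ (b + v).val = m - 1) ∨ ((b + v).val = 0 ∧ (a + v).val = m - 1)
  rw [add_val_cases, add_val_cases]
  have := a.isLt; have := b.isLt; have := v.isLt
  split_ifs <;> omega

def qmap (m : ℕ) [NeZero m] (i : Fin (m + 1)) : Fin m :=
  ⟨i.val % m, Nat.mod_lt _ (Nat.pos_of_ne_zero (NeZero.ne m))⟩

lemma qmap_val [NeZero m] (i : Fin (m + 1)) :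
    (qmap m i).val = if i.val = m then 0 else i.val := by
  have hm : 0 < m := Nat.pos_of_ne_zero (NeZero.ne m)
  have hi := i.isLt
  show i.val % m = _
  split_ifs with h
  · rw [h, Nat.mod_self]
  · exact Nat.mod_eq_of_lt (by omega)

lemma qmap_hom (hm : 3 ≤ m) [NeZero m] (a b : Fin (m + 1))
    (h : (pathGraph (m + 1)).Adj a b) :
    (cycleGraph m).Adj (qmap m a) (qmap m b) := by
  rw [pathGraph_adj] at h
  rw [cycle_adj_iff hm, qmap_val, qmap_val]
  have := a.isLt; have := b.isLt
  split_ifs <;> omega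


variable [NeZero m]

lemma fiber_zero (E : Fin (m + 1) → ℕ) (w : Fin m) (hw : w.val = 0)
    (x1 xm : Fin (m + 1)) (h1 : x1.val = 0) (h2 : xm.val = m) :
    push (qmap m) E w = E x1 + E xm := by
  have hm : 0 < m := Nat.pos_of_ne_zero (NeZero.ne m)
  have hfil : univ.filter (fun v : Fin (m+1) => qmap m v = w) = {x1, xm} := by
    ext x
    have hx := x.isLt
    simp only [Finset.mem_filter, Finset.mem_univ, true_and, Finset.mem_insert,
      Finset.mem_singleton, Fin.ext_iff, qmap_val, hw, h1, h2]
    split_ifs with h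
    · omega
    · constructor
      · intro h'; omega
      · intro h'; omega
  rw [push, hfil, Finset.sum_pair (by rw [Ne, Fin.ext_iff, h1, h2]; omega)]

lemma fiber_ne (E : Fin (m + 1) → ℕ) (w : Fin m) (hw : w.val ≠ 0)
    (w' : Fin (m + 1)) (hw' : w'.val = w.val) :
    push (qmap m) E w = E w' := by
  have hfil : univ.filter (fun v : Fin (m+1) => qmap m v = w) = {w'} := by
    ext x
    have hx := x.isLt
    have hwlt := w.isLt
    simp only [Finset.mem_filter, Finset.mem_univ, true_and, Finset.mem_singleton,
      Fin.ext_iff, qmap_val, hw']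
    split_ifs with h
    · omega
    · omega
  rw [push, hfil, Finset.sum_singleton]

end Specific

section ReachHelpers
variable {V : Type*} [DecidableEq V]

lemma reaches_of_move {G : SimpleGraph V} {D : V → ℕ} {u t : V}
    (hadj : G.Adj u t) (h2 : 2 ≤ D u) : Reaches G D (unitDist 1 t) := by
  refine ⟨_, Relation.ReflTransGen.single ⟨u, t, hadj, h2, rfl⟩, fun w => ?_⟩
  by_cases hw : w = t
  · subst hw
    simp [unitDist, hadj.ne']
  · simp [unitDist, hw]

lemma reaches_self_of_le {G : SimpleGraph V} {D : V → ℕ} {t : V}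
    (h : 1 ≤ D t) : Reaches G D (unitDist 1 t) := by
  refine ⟨D, Relation.ReflTransGen.refl, fun w => ?_⟩
  by_cases hw : w = t
  · subst hw; simpa [unitDist] using h
  · simp [unitDist, hw]

end ReachHelpers

section Lift
open SimpleGraph
variable {m : ℕ} [NeZero m]

lemma lift_reach (hm : 3 ≤ m) {B : Fin m → ℕ}
    (hB : 1 ≤ B ⟨0, Nat.pos_of_ne_zero (NeZero.ne m)⟩)
    {A : Fin m → ℕ} (hAB : Relation.ReflTransGen (PebMove (cycleGraph m)) A B) :
    ∀ E : Fin (m + 1) → ℕ, A = push (qmap m) E →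
      E ⟨0, Nat.succ_pos m⟩ = 0 → E ⟨m, Nat.lt_succ_self m⟩ = 0 →
      Reaches (pathGraph (m + 1)) E (unitDist 1 (⟨0, Nat.succ_pos m⟩ : Fin (m + 1))) ∨
      Reaches (pathGraph (m + 1)) E (unitDist 1 (⟨m, Nat.lt_succ_self m⟩ : Fin (m + 1))) := by
  induction hAB using Relation.ReflTransGen.head_induction_on with
  | refl =>
    intro E hE h0 hm'
    exfalso
    rw [hE, fiber_zero E ⟨0, Nat.pos_of_ne_zero (NeZero.ne m)⟩ rfl
      ⟨0, Nat.succ_pos m⟩ ⟨m, Nat.lt_succ_self m⟩ rfl rfl] at hB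
    omega
  | @head a c hac hcb ih =>
    intro E hE h0 hm'
    subst hE
    obtain ⟨u, v, hadj, h2, hc⟩ := hac
    have hu0 : u.val ≠ 0 := by
      intro h
      rw [fiber_zero E u h ⟨0, Nat.succ_pos m⟩ ⟨m, Nat.lt_succ_self m⟩ rfl rfl] at h2
      omega
    have hadj' := (cycle_adj_iff hm u v).1 hadj
    have huv : u ≠ v := hadj.ne
    have huv' : u.val ≠ v.val := fun h => huv (Fin.ext h)
    have hult := u.isLt; have hvlt := v.isLt
    have hEu : 2 ≤ E ⟨u.val, Nat.lt_succ_of_lt u.isLt⟩ := by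
      rwa [fiber_ne E u hu0 ⟨u.val, Nat.lt_succ_of_lt u.isLt⟩ rfl] at h2
    by_cases hv0 : v.val = 0
    · -- final move into the cut vertex
      rcases (by omega : u.val = 1 ∨ u.val = m - 1) with hcase | hcase
      · left
        refine reaches_of_move (u := ⟨u.val, Nat.lt_succ_of_lt u.isLt⟩) ?_ hEu
        rw [pathGraph_adj]
        right
        show 0 + 1 = u.val
        omega
      · right
        refine reaches_of_move (u := ⟨u.val, Nat.lt_succ_of_lt u.isLt⟩) ?_ hEu
        rw [pathGraph_adj]
        left
        show u.val + 1 = m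
        omega
    · -- interior move
      have hocase : u.val + 1 = v.val ∨ v.val + 1 = u.val := by omega
      have hqu : qmap m (⟨u.val, Nat.lt_succ_of_lt u.isLt⟩ : Fin (m+1)) = u := by
        apply Fin.ext
        rw [qmap_val]
        show (if u.val = m then 0 else u.val) = u.val
        rw [if_neg (by omega)]
      have hqv : qmap m (⟨v.val, Nat.lt_succ_of_lt v.isLt⟩ : Fin (m+1)) = v := by
        apply Fin.ext
        rw [qmap_val]
        show (if v.val = m then 0 else v.val) = v.val
        rw [if_neg (by omega)]
      have hne : qmap m (⟨u.val, Nat.lt_succ_of_lt u.isLt⟩ : Fin (m+1))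
          ≠ qmap m (⟨v.val, Nat.lt_succ_of_lt v.isLt⟩ : Fin (m+1)) := by
        rw [hqu, hqv]; exact huv
      have key := push_move_eq (qmap m) E ⟨u.val, Nat.lt_succ_of_lt u.isLt⟩
        ⟨v.val, Nat.lt_succ_of_lt v.isLt⟩ hne hEu
      rw [hqu, hqv] at key
      have hcnew : c = push (qmap m) (fun w =>
          if w = (⟨u.val, Nat.lt_succ_of_lt u.isLt⟩ : Fin (m+1)) then
            E ⟨u.val, Nat.lt_succ_of_lt u.isLt⟩ - 2
          else if w = (⟨v.val, Nat.lt_succ_of_lt v.isLt⟩ : Fin (m+1)) then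
            E ⟨v.val, Nat.lt_succ_of_lt v.isLt⟩ + 1
          else E w) := by
        rw [key]; exact hc
      have hx1u : (⟨0, Nat.succ_pos m⟩ : Fin (m+1))
          ≠ ⟨u.val, Nat.lt_succ_of_lt u.isLt⟩ := by
        simp only [Ne, Fin.ext_iff]; omega
      have hx1v : (⟨0, Nat.succ_pos m⟩ : Fin (m+1))
          ≠ ⟨v.val, Nat.lt_succ_of_lt v.isLt⟩ := by
        simp only [Ne, Fin.ext_iff]; omega
      have hxmu : (⟨m, Nat.lt_succ_self m⟩ : Fin (m+1))
          ≠ ⟨u.val, Nat.lt_succ_of_lt u.isLt⟩ := by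
        simp only [Ne, Fin.ext_iff]; omega
      have hxmv : (⟨m, Nat.lt_succ_self m⟩ : Fin (m+1))
          ≠ ⟨v.val, Nat.lt_succ_of_lt v.isLt⟩ := by
        simp only [Ne, Fin.ext_iff]; omega
      have hpm : PebMove (pathGraph (m+1)) E (fun w =>
          if w = (⟨u.val, Nat.lt_succ_of_lt u.isLt⟩ : Fin (m+1)) then
            E ⟨u.val, Nat.lt_succ_of_lt u.isLt⟩ - 2
          else if w = (⟨v.val, Nat.lt_succ_of_lt v.isLt⟩ : Fin (m+1)) then
            E ⟨v.val, Nat.lt_succ_of_lt v.isLt⟩ + 1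
          else E w) := by
        refine ⟨⟨u.val, Nat.lt_succ_of_lt u.isLt⟩, ⟨v.val, Nat.lt_succ_of_lt v.isLt⟩,
          ?_, hEu, rfl⟩
        rw [pathGraph_adj]
        exact hocase
      rcases ih _ hcnew (by simp only [if_neg hx1u, if_neg hx1v]; exact h0)
          (by simp only [if_neg hxmu, if_neg hxmv]; exact hm') with h | h
      · exact Or.inl (reaches_head hpm h)
      · exact Or.inr (reaches_head hpm h)

end Lift


open SimpleGraph in
/-- The target-selectable pebbling number of the two endpoint targets on the
path `Pₙ` equals the pebbling number of the cycle `C_{n-1}`. -/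
theorem ts_path_endpoints_eq_cycle (n : ℕ) (hn : 4 ≤ n) :
    tsPeb (pathGraph n)
        {unitDist 1 (⟨0, by omega⟩ : Fin n), unitDist 1 (⟨n - 1, by omega⟩ : Fin n)}
      = pebSet (cycleGraph (n - 1)) {D | ∃ v : Fin (n - 1), D = unitDist 1 v} := by
  obtain ⟨m, rfl⟩ : ∃ m, n = m + 1 := ⟨n - 1, by omega⟩
  have hm : 3 ≤ m := by omega
  haveI : NeZero m := ⟨by omega⟩
  show tsPeb (pathGraph (m+1))
      {unitDist 1 (⟨0, Nat.succ_pos m⟩ : Fin (m+1)),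
       unitDist 1 (⟨m, Nat.lt_succ_self m⟩ : Fin (m+1))}
    = pebSet (cycleGraph m) {D | ∃ v : Fin m, D = unitDist 1 v}
  have hmne : ¬ (0 : ℕ) = m := by omega
  have hmne' : ¬ (m : ℕ) = 0 := by omega
  unfold tsPeb pebSet
  refine congrArg sInf (Set.ext fun N => ?_)
  simp only [Set.mem_setOf_eq]
  constructor
  · -- path property → cycle property
    rintro h D₀ hN D ⟨v, rfl⟩
    set D₁ : Fin m → ℕ := push (⇑(rot v)) D₀ with hD₁
    have hD₁' : D₁ = fun w => D₀ ((rot v).symm w) := push_equiv (rot v) D₀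
    set E : Fin (m+1) → ℕ := fun i => if i.val = m then 0 else D₁ (qmap m i) with hE
    have hE0 : E ⟨0, Nat.succ_pos m⟩ = D₁ (qmap m ⟨0, Nat.succ_pos m⟩) := if_neg hmne
    have hEm : E ⟨m, Nat.lt_succ_self m⟩ = 0 := if_pos rfl
    have hpushE : push (qmap m) E = D₁ := by
      funext w
      by_cases hw : w.val = 0
      · rw [fiber_zero E w hw ⟨0, Nat.succ_pos m⟩ ⟨m, Nat.lt_succ_self m⟩ rfl rfl]
        have e2 : qmap m (⟨0, Nat.succ_pos m⟩ : Fin (m+1)) = w := by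
          apply Fin.ext
          rw [qmap_val, hw]
          exact if_neg hmne
        rw [hE0, hEm, e2]
        omega
      · have hwlt := w.isLt
        rw [fiber_ne E w hw ⟨w.val, Nat.lt_succ_of_lt w.isLt⟩ rfl]
        have e2 : qmap m (⟨w.val, Nat.lt_succ_of_lt w.isLt⟩ : Fin (m+1)) = w := by
          apply Fin.ext
          rw [qmap_val]
          exact if_neg (show ¬ w.val = m by omega)
        have e1 : E ⟨w.val, Nat.lt_succ_of_lt w.isLt⟩
            = D₁ (qmap m ⟨w.val, Nat.lt_succ_of_lt w.isLt⟩) :=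
          if_neg (show ¬ w.val = m by omega)
        rw [e1, e2]
    have htot : pebTotal E = pebTotal D₀ := by
      calc pebTotal E = pebTotal (push (qmap m) E) := (pebTotal_push _ _).symm
        _ = pebTotal D₁ := by rw [hpushE]
        _ = pebTotal D₀ := by rw [hD₁]; exact pebTotal_push _ _
    obtain ⟨D, hD, hre⟩ := h E (by rw [htot]; exact hN)
    have hq1 : push (qmap m) (unitDist 1 (⟨0, Nat.succ_pos m⟩ : Fin (m+1)))
        = unitDist 1 (⟨0, Nat.pos_of_ne_zero (NeZero.ne m)⟩ : Fin m) := by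
      funext w
      by_cases hw : w.val = 0
      · have hw' : w = ⟨0, Nat.pos_of_ne_zero (NeZero.ne m)⟩ := Fin.ext hw
        rw [fiber_zero _ w hw ⟨0, Nat.succ_pos m⟩ ⟨m, Nat.lt_succ_self m⟩ rfl rfl, hw']
        show (if (⟨0, Nat.succ_pos m⟩ : Fin (m+1)) = ⟨0, Nat.succ_pos m⟩ then 1 else 0)
            + (if (⟨m, Nat.lt_succ_self m⟩ : Fin (m+1)) = ⟨0, Nat.succ_pos m⟩ then 1 else 0)
          = if (⟨0, Nat.pos_of_ne_zero (NeZero.ne m)⟩ : Fin m)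
              = ⟨0, Nat.pos_of_ne_zero (NeZero.ne m)⟩ then 1 else 0
        rw [if_pos rfl, if_pos rfl, if_neg (Fin.ne_of_val_ne hmne')]
      · rw [fiber_ne _ w hw ⟨w.val, Nat.lt_succ_of_lt w.isLt⟩ rfl]
        show (if (⟨w.val, Nat.lt_succ_of_lt w.isLt⟩ : Fin (m+1)) = ⟨0, Nat.succ_pos m⟩
              then 1 else 0)
          = if w = ⟨0, Nat.pos_of_ne_zero (NeZero.ne m)⟩ then 1 else 0
        rw [if_neg (Fin.ne_of_val_ne hw), if_neg (fun hc => hw (congrArg Fin.val hc))]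
    have hq2 : push (qmap m) (unitDist 1 (⟨m, Nat.lt_succ_self m⟩ : Fin (m+1)))
        = unitDist 1 (⟨0, Nat.pos_of_ne_zero (NeZero.ne m)⟩ : Fin m) := by
      funext w
      by_cases hw : w.val = 0
      · have hw' : w = ⟨0, Nat.pos_of_ne_zero (NeZero.ne m)⟩ := Fin.ext hw
        rw [fiber_zero _ w hw ⟨0, Nat.succ_pos m⟩ ⟨m, Nat.lt_succ_self m⟩ rfl rfl, hw']
        show (if (⟨0, Nat.succ_pos m⟩ : Fin (m+1)) = ⟨m, Nat.lt_succ_self m⟩ then 1 else 0)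
            + (if (⟨m, Nat.lt_succ_self m⟩ : Fin (m+1)) = ⟨m, Nat.lt_succ_self m⟩
                then 1 else 0)
          = if (⟨0, Nat.pos_of_ne_zero (NeZero.ne m)⟩ : Fin m)
              = ⟨0, Nat.pos_of_ne_zero (NeZero.ne m)⟩ then 1 else 0
        rw [if_pos rfl, if_pos rfl, if_neg (Fin.ne_of_val_ne hmne)]
      · have hwlt := w.isLt
        rw [fiber_ne _ w hw ⟨w.val, Nat.lt_succ_of_lt w.isLt⟩ rfl]
        show (if (⟨w.val, Nat.lt_succ_of_lt w.isLt⟩ : Fin (m+1)) = ⟨m, Nat.lt_succ_self m⟩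
              then 1 else 0)
          = if w = ⟨0, Nat.pos_of_ne_zero (NeZero.ne m)⟩ then 1 else 0
        rw [if_neg (Fin.ne_of_val_ne (show w.val ≠ m by omega)),
          if_neg (fun hc => hw (congrArg Fin.val hc))]
    have hre2 : Reaches (cycleGraph m) D₁
        (unitDist 1 (⟨0, Nat.pos_of_ne_zero (NeZero.ne m)⟩ : Fin m)) := by
      simp only [Set.mem_insert_iff, Set.mem_singleton_iff] at hD
      rcases hD with rfl | rfl
      · have := push_reaches (fun a b hab => qmap_hom hm a b hab) hre
        rwa [hpushE, hq1] at this
      · have := push_reaches (fun a b hab => qmap_hom hm a b hab) hre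
        rwa [hpushE, hq2] at this
    have hre3 := push_reaches (fun a b hab => rot_symm_hom hm v a b hab) hre2
    have e4 : push (⇑(rot v).symm) D₁ = D₀ := by
      funext w
      simp only [push_equiv, Equiv.symm_symm, hD₁', Equiv.symm_apply_apply]
    have e5 : push (⇑(rot v).symm)
        (unitDist 1 (⟨0, Nat.pos_of_ne_zero (NeZero.ne m)⟩ : Fin m)) = unitDist 1 v := by
      funext w
      simp only [push_equiv, Equiv.symm_symm]
      show (if w - v = (⟨0, Nat.pos_of_ne_zero (NeZero.ne m)⟩ : Fin m) then 1 else 0)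
        = if w = v then 1 else 0
      have hwlt := w.isLt; have hvlt := v.isLt
      by_cases hw : w = v
      · subst hw
        rw [if_pos rfl, if_pos]
        apply Fin.ext
        show (w - w).val = 0
        rw [sub_val_cases]
        simp
      · have hwv : w.val ≠ v.val := fun hh => hw (Fin.ext hh)
        rw [if_neg hw, if_neg]
        intro hcon
        have hval : (w - v).val = 0 := congrArg Fin.val hcon
        rw [sub_val_cases] at hval
        split_ifs at hval <;> omega
    rw [e4, e5] at hre3
    exact hre3
  · -- cycle property → path property
    rintro h D₀ hN
    by_cases h1 : 1 ≤ D₀ ⟨0, Nat.succ_pos m⟩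
    · exact ⟨_, Set.mem_insert _ _, reaches_self_of_le h1⟩
    by_cases h2 : 1 ≤ D₀ ⟨m, Nat.lt_succ_self m⟩
    · exact ⟨_, Set.mem_insert_iff.2 (Or.inr rfl), reaches_self_of_le h2⟩
    · have h0 : D₀ ⟨0, Nat.succ_pos m⟩ = 0 := by omega
      have hm' : D₀ ⟨m, Nat.lt_succ_self m⟩ = 0 := by omega
      have hre := h (push (qmap m) D₀) (by rw [pebTotal_push]; exact hN)
        (unitDist 1 (⟨0, Nat.pos_of_ne_zero (NeZero.ne m)⟩ : Fin m))
        ⟨⟨0, Nat.pos_of_ne_zero (NeZero.ne m)⟩, rfl⟩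
      obtain ⟨B, hrtg, hle⟩ := hre
      have hB : 1 ≤ B ⟨0, Nat.pos_of_ne_zero (NeZero.ne m)⟩ := by
        have h3 := hle ⟨0, Nat.pos_of_ne_zero (NeZero.ne m)⟩
        rwa [show unitDist 1 (⟨0, Nat.pos_of_ne_zero (NeZero.ne m)⟩ : Fin m)
            ⟨0, Nat.pos_of_ne_zero (NeZero.ne m)⟩ = 1 from if_pos rfl] at h3
      rcases lift_reach hm hB hrtg D₀ rfl h0 hm' with hh | hh
      · exact ⟨_, Set.mem_insert _ _, hh⟩
      · exact ⟨_, Set.mem_insert_iff.2 (Or.inr rfl), hh⟩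
end
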